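/- Fix an integer k ≥ 1, a real z ≥ 1, and reals ζ₁, ζ₂ ≥ 1. There exists a constant γ ≥ 1 depending only on z, ζ₁, ζ₂ such that for every instance of the constrained-clustering setup (with S, Q, Ψ, π_Q, n_b as in the setup): Ψ + n_b · r^z ≤ γ · Cost(X, S). -/
import Mathlib


open scoped BigOperators Classical

/-- `dSet x C` is the distance from the point `x` to the finite set `C`. -/
noncomputable def dSet {d : ℕ} (x : EuclideanSpace ℝ (Fin d))
    (C : Finset (EuclideanSpace ℝ (Fin d))) : ℝ :=
  sInf ((fun c => dist x c) '' (C : Set (EuclideanSpace ℝ (Fin d))))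

/-- `kzCost z X C = Σ_{x ∈ X} dist(x,C)^z`. -/
noncomputable def kzCost {d : ℕ} (z : ℝ) (X C : Finset (EuclideanSpace ℝ (Fin d))) : ℝ :=
  ∑ x ∈ X, dSet x C ^ z

lemma dSet_nonneg {d : ℕ} (x : EuclideanSpace ℝ (Fin d))
    (C : Finset (EuclideanSpace ℝ (Fin d))) : 0 ≤ dSet x C := by
  unfold dSet
  rcases C.eq_empty_or_nonempty with h | h
  · simp [h, Real.sInf_empty]
  · apply le_csInf
    · exact (Set.Nonempty.image _ (by exact_mod_cast h))
    · rintro b ⟨c, _, rfl⟩; exact dist_nonneg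

lemma dSet_le {d : ℕ} {x c : EuclideanSpace ℝ (Fin d)}
    {C : Finset (EuclideanSpace ℝ (Fin d))} (hc : c ∈ C) : dSet x C ≤ dist x c := by
  apply csInf_le
  · exact ⟨0, by rintro b ⟨c', _, rfl⟩; exact dist_nonneg⟩
  · exact ⟨c, by simpa using hc, rfl⟩

lemma le_dSet {d : ℕ} {x : EuclideanSpace ℝ (Fin d)}
    {C : Finset (EuclideanSpace ℝ (Fin d))} (hC : C.Nonempty) {b : ℝ}
    (h : ∀ c ∈ C, b ≤ dist x c) : b ≤ dSet x C := by
  apply le_csInf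
  · exact Set.Nonempty.image _ (by exact_mod_cast hC)
  · rintro t ⟨c, hc, rfl⟩; exact h c (by simpa using hc)

lemma kzCost_nonneg {d : ℕ} (z : ℝ) (X C : Finset (EuclideanSpace ℝ (Fin d))) :
    0 ≤ kzCost z X C :=
  Finset.sum_nonneg fun y _ => Real.rpow_nonneg (dSet_nonneg y C) z

/-- The estimate `Ψ + n_b · r^z` never overestimates (up to a constant factor) the optimal
constrained `(k,z)`-medoids cost `Cost(X,S)`, where `S` contains `p`, has no center in the
interior of `B_r(x)`, `Q` is a `ζ₁`-approximate medoids solution containing `p`, `Ψ` is a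
`ζ₂`-approximation of `Cost(X,Q)`, and `n_b` counts points assigned by `π` to centers in
`B_{r/2}(x)`. -/
theorem constrained_estimate_underestimates
    (z ζ₁ ζ₂ : ℝ) (hz : 1 ≤ z) (hζ₁ : 1 ≤ ζ₁) (hζ₂ : 1 ≤ ζ₂) :
    ∃ γ : ℝ, 1 ≤ γ ∧
      ∀ (k d : ℕ), 1 ≤ k → 1 ≤ d →
        ∀ (X S Q : Finset (EuclideanSpace ℝ (Fin d))) (x p : EuclideanSpace ℝ (Fin d))
          (Ψ : ℝ) (π : EuclideanSpace ℝ (Fin d) → EuclideanSpace ℝ (Fin d)),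
          k < X.card → x ∈ X → p ∈ X → 0 < dist x p →
          S ⊆ X → p ∈ S → S.card ≤ k → (∀ t ∈ S, dist x p ≤ dist t x) →
          (∀ T : Finset (EuclideanSpace ℝ (Fin d)), T ⊆ X → p ∈ T → T.card ≤ k →
            (∀ t ∈ T, dist x p ≤ dist t x) → kzCost z X S ≤ kzCost z X T) →
          Q ⊆ X → p ∈ Q → Q.card ≤ k →
          (∀ T : Finset (EuclideanSpace ℝ (Fin d)), T ⊆ X → p ∈ T → T.card ≤ k →
            kzCost z X Q ≤ ζ₁ * kzCost z X T) →
          (1 / ζ₂) * kzCost z X Q ≤ Ψ → Ψ ≤ ζ₂ * kzCost z X Q →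
          (∀ y ∈ X, π y ∈ Q ∧ dist y (π y) = dSet y Q) →
          Ψ + ((X.filter (fun y => dist (π y) x ≤ dist x p / 2)).card : ℝ)
              * dist x p ^ z ≤ γ * kzCost z X S := by
  have h4z : (0:ℝ) ≤ (4:ℝ) ^ z := Real.rpow_nonneg (by norm_num) z
  refine ⟨ζ₂ * ζ₁ + (4:ℝ) ^ z * (1 + ζ₁), by nlinarith, ?_⟩
  intro k d hk hd X S Q x p Ψ π hkX hxX hpX hr hSX hpS hSk hSfar hSopt hQX hpQ hQk hQapx
    hΨ1 hΨ2 hπ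
  set r := dist x p with hrdef
  have hz0 : (0:ℝ) ≤ z := by linarith
  -- approximation chain
  have hQS : kzCost z X Q ≤ ζ₁ * kzCost z X S := hQapx S hSX hpS hSk
  have hΨS : Ψ ≤ ζ₂ * (ζ₁ * kzCost z X S) :=
    le_trans hΨ2 (mul_le_mul_of_nonneg_left hQS (by linarith))
  -- pointwise bound on filtered points
  set F := X.filter (fun y => dist (π y) x ≤ r / 2) with hF
  have key : ∀ y ∈ F, r ^ z ≤ (4:ℝ) ^ z * (dSet y S ^ z + dSet y Q ^ z) := by
    intro y hy
    rw [hF, Finset.mem_filter] at hy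
    obtain ⟨hyX, hyb⟩ := hy
    have hQy := hπ y hyX
    have hSne : S.Nonempty := ⟨p, hpS⟩
    have hr4 : (0:ℝ) ≤ r / 4 := by linarith
    have base : ∀ w : ℝ, r / 4 ≤ w → 0 ≤ w → r ^ z ≤ (4:ℝ) ^ z * w ^ z := by
      intro w hw hw0
      have e : r = 4 * (r / 4) := by ring
      calc r ^ z = (4 * (r / 4)) ^ z := by rw [← e]
        _ = (4:ℝ) ^ z * (r / 4) ^ z := Real.mul_rpow (by norm_num) hr4
        _ ≤ (4:ℝ) ^ z * w ^ z :=
          mul_le_mul_of_nonneg_left (Real.rpow_le_rpow hr4 hw hz0) h4z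
    rcases le_or_gt (dist y x) (3 * r / 4) with ha | ha
    · have hlow : r / 4 ≤ dSet y S := by
        apply le_dSet hSne
        intro c hc
        have h1 := hSfar c hc
        have t := dist_triangle x y c
        rw [dist_comm c x] at h1
        rw [dist_comm x y] at t
        linarith
      have := base _ hlow (dSet_nonneg y S)
      have hq0 : 0 ≤ dSet y Q ^ z := Real.rpow_nonneg (dSet_nonneg y Q) z
      nlinarith
    · have hlow : r / 4 ≤ dSet y Q := by
        rw [← hQy.2]
        have t := dist_triangle y (π y) x
        have t2 := dist_triangle x (π y) y
        have : dist y x ≤ dist y (π y) + dist (π y) x := dist_triangle y (π y) x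
        linarith
      have := base _ hlow (dSet_nonneg y Q)
      have hs0 : 0 ≤ dSet y S ^ z := Real.rpow_nonneg (dSet_nonneg y S) z
      nlinarith
  -- sum the pointwise bounds
  have sum1 : (F.card : ℝ) * r ^ z ≤ ∑ y ∈ F, (4:ℝ) ^ z * (dSet y S ^ z + dSet y Q ^ z) := by
    rw [show (F.card : ℝ) * r ^ z = ∑ _y ∈ F, r ^ z by
      rw [Finset.sum_const, nsmul_eq_mul]]
    exact Finset.sum_le_sum key
  have sum2 : ∑ y ∈ F, (4:ℝ) ^ z * (dSet y S ^ z + dSet y Q ^ z)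
      ≤ (4:ℝ) ^ z * (kzCost z X S + kzCost z X Q) := by
    have : ∑ y ∈ F, (dSet y S ^ z + dSet y Q ^ z)
        ≤ ∑ y ∈ X, (dSet y S ^ z + dSet y Q ^ z) := by
      apply Finset.sum_le_sum_of_subset_of_nonneg (Finset.filter_subset _ _)
      intro y _ _
      exact add_nonneg (Real.rpow_nonneg (dSet_nonneg y S) z)
        (Real.rpow_nonneg (dSet_nonneg y Q) z)
    rw [← Finset.mul_sum]
    have e : ∑ y ∈ X, (dSet y S ^ z + dSet y Q ^ z) = kzCost z X S + kzCost z X Q := by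
      rw [Finset.sum_add_distrib]; rfl
    calc (4:ℝ) ^ z * ∑ y ∈ F, (dSet y S ^ z + dSet y Q ^ z)
        ≤ (4:ℝ) ^ z * ∑ y ∈ X, (dSet y S ^ z + dSet y Q ^ z) :=
          mul_le_mul_of_nonneg_left this h4z
      _ = (4:ℝ) ^ z * (kzCost z X S + kzCost z X Q) := by rw [e]
  have hfinal : (F.card : ℝ) * r ^ z ≤ (4:ℝ) ^ z * (1 + ζ₁) * kzCost z X S := by
    have := le_trans sum1 sum2
    nlinarith
  calc Ψ + (F.card : ℝ) * r ^ z
      ≤ ζ₂ * (ζ₁ * kzCost z X S) + (4:ℝ) ^ z * (1 + ζ₁) * kzCost z X S :=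
        add_le_add hΨS hfinal
    _ = (ζ₂ * ζ₁ + (4:ℝ) ^ z * (1 + ζ₁)) * kzCost z X S := by ring
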